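/- The orbit {w(û₂) : w ∈ W(E₆)} of the unit vector û₂ under the Weyl group W(E₆) is a finite set with exactly 27 elements. (Equivalently: the Coxeter complex of type E₆ has exactly 27 vertices of type 2, the number |W(E₆)|/|W(D₅)| = 3³.) -/

import Mathlib

noncomputable section

open scoped RealInnerProductSpace

/-- Euclidean space `ℝ⁸`. -/
abbrev E8Space := EuclideanSpace ℝ (Fin 8)

/-- The fundamental root vectors of the root system of type `E₆` inside `ℝ⁸`:
`r₁ = ½(1,1,1,−1,−1,−1,−1,−1)`, `rᵢ = eᵢ − eᵢ₋₁` for `2 ≤ i ≤ 5`, and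
`r₆ = ½(1,1,1,1,−1,1,1,1)` (here indexed by `Fin 6`, with `j = 0` corresponding
to `r₁` and `j = 5` to `r₆`). -/
def E6root : Fin 6 → E8Space := fun j =>
  if j = 0 then WithLp.toLp 2 (fun i => if (i : ℕ) < 3 then (1 : ℝ) / 2 else -(1 / 2))
  else if j = 5 then WithLp.toLp 2 (fun i => if (i : ℕ) = 4 then -(1 : ℝ) / 2 else 1 / 2)
  else WithLp.toLp 2 (fun i => if (i : ℕ) = (j : ℕ) then (1 : ℝ)
        else if (i : ℕ) + 1 = (j : ℕ) then -1 else 0)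

/-- The Weyl group `W(E₆)`: the subgroup of linear isometries of `ℝ⁸` generated by the
reflections `s_r(x) = x − 2(⟨x,r⟩/⟨r,r⟩)r` in the fundamental root vectors of type `E₆`.
These generators preserve the subspace `V = {x : x₆ = x₇ = x₈}` realizing the Coxeter
complex of type `E₆`. -/
def WeylE6 : Subgroup (E8Space ≃ₗᵢ[ℝ] E8Space) :=
  Subgroup.closure
    { f | ∃ j : Fin 6, ∀ x : E8Space,
        f x = x - ((2 * ⟪x, E6root j⟫ / ⟪E6root j, E6root j⟫) • E6root j) }

/-- `û₂ = (−3,3,3,3,3,−1,−1,−1)/(4√3)`, a unit vector representing a vertex of type 2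
of the Coxeter complex of type `E₆`. -/
def u2hatE6 : E8Space := WithLp.toLp 2 (fun i =>
  (if (i : ℕ) = 0 then -3 else if (i : ℕ) < 5 then 3 else -1) / (4 * Real.sqrt 3))

/-- `û₆ = (3,3,3,3,3,1,1,1)/(4√3)`, a unit vector representing a vertex of type 6
of the Coxeter complex of type `E₆`. -/
def u6hatE6 : E8Space := WithLp.toLp 2 (fun i =>
  (if (i : ℕ) < 5 then 3 else 1) / (4 * Real.sqrt 3))

namespace E6aux

/-- doubled roots, integer entries -/
def drootZ : Fin 6 → Fin 8 → ℤ := fun j =>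
  if j = 0 then (fun i => if (i : ℕ) < 3 then 1 else -1)
  else if j = 5 then (fun i => if (i : ℕ) = 4 then -1 else 1)
  else (fun i => if (i : ℕ) = (j : ℕ) then 2
        else if (i : ℕ) + 1 = (j : ℕ) then -2 else 0)

def MZ : Fin 27 → Fin 8 → ℤ :=
  ![![-3, 3, 3, 3, 3, -1, -1, -1],
    ![3, -3, 3, 3, 3, -1, -1, -1],
    ![3, 3, -3, 3, 3, -1, -1, -1],
    ![3, 3, 3, -3, 3, -1, -1, -1],
    ![0, 0, 0, 0, 6, 2, 2, 2],
    ![3, 3, 3, 3, -3, -1, -1, -1],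
    ![0, 0, 0, 6, 0, 2, 2, 2],
    ![0, 0, 0, 0, 0, -4, -4, -4],
    ![0, 0, 6, 0, 0, 2, 2, 2],
    ![-3, -3, -3, 3, 3, -1, -1, -1],
    ![0, 6, 0, 0, 0, 2, 2, 2],
    ![-3, -3, 3, -3, 3, -1, -1, -1],
    ![6, 0, 0, 0, 0, 2, 2, 2],
    ![-3, 3, -3, -3, 3, -1, -1, -1],
    ![-3, -3, 3, 3, -3, -1, -1, -1],
    ![3, -3, -3, -3, 3, -1, -1, -1],
    ![-3, 3, -3, 3, -3, -1, -1, -1],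
    ![3, -3, -3, 3, -3, -1, -1, -1],
    ![-3, 3, 3, -3, -3, -1, -1, -1],
    ![3, -3, 3, -3, -3, -1, -1, -1],
    ![-6, 0, 0, 0, 0, 2, 2, 2],
    ![0, -6, 0, 0, 0, 2, 2, 2],
    ![3, 3, -3, -3, -3, -1, -1, -1],
    ![0, 0, -6, 0, 0, 2, 2, 2],
    ![0, 0, 0, -6, 0, 2, 2, 2],
    ![0, 0, 0, 0, -6, 2, 2, 2],
    ![-3, -3, -3, -3, -3, -1, -1, -1]]

def tgtE6 : Fin 6 → Fin 27 → Fin 27 :=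
  ![![0, 1, 2, 4, 3, 6, 5, 9, 8, 7, 10, 11, 12, 13, 14, 15, 16, 17, 20, 21, 18, 19, 23, 22, 24, 25, 26],
    ![1, 0, 2, 3, 4, 5, 6, 7, 8, 9, 12, 11, 10, 15, 14, 13, 17, 16, 19, 18, 21, 20, 22, 23, 24, 25, 26],
    ![0, 2, 1, 3, 4, 5, 6, 7, 10, 9, 8, 13, 12, 11, 16, 15, 14, 17, 18, 22, 20, 23, 19, 21, 24, 25, 26],
    ![0, 1, 3, 2, 4, 5, 8, 7, 6, 11, 10, 9, 12, 13, 14, 15, 18, 19, 16, 17, 20, 21, 22, 24, 23, 25, 26],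
    ![0, 1, 2, 5, 6, 3, 4, 7, 8, 9, 10, 14, 12, 16, 11, 17, 13, 15, 18, 19, 20, 21, 22, 23, 25, 24, 26],
    ![0, 1, 2, 3, 4, 7, 9, 5, 11, 6, 13, 8, 15, 10, 14, 12, 16, 17, 18, 19, 20, 21, 22, 23, 24, 26, 25]]

def parE6 : Fin 27 → Fin 6 × Fin 27 :=
  ![(0, 0), (1, 0), (2, 1), (3, 2), (0, 3), (4, 3), (4, 4), (5, 5), (3, 6), (5, 6), (2, 8), (5, 8), (1, 10), (5, 10), (4, 11), (5, 12), (4, 13), (4, 15), (3, 16), (3, 17), (0, 18), (0, 19), (2, 19), (2, 21), (3, 23), (4, 24), (5, 25)]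

def dotZ (v w : Fin 8 → ℤ) : ℤ := ∑ i, v i * w i

def reflZ (j : Fin 6) (v : Fin 8 → ℤ) : Fin 8 → ℤ :=
  v - (dotZ v (drootZ j) / 4) • drootZ j

lemma tgt_spec : ∀ j k, reflZ j (MZ k) = MZ (tgtE6 j k) := by decide

lemma dvd_spec : ∀ j k, (4 : ℤ) ∣ dotZ (MZ k) (drootZ j) := by decide

lemma droot_norm : ∀ j, dotZ (drootZ j) (drootZ j) = 8 := by decide

lemma MZ_inj : Function.Injective MZ := by decide

lemma par_lt : ∀ k : Fin 27, k ≠ 0 → ((parE6 k).2 : ℕ) < (k : ℕ) := by decide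

lemma par_tgt : ∀ k : Fin 27, k ≠ 0 → tgtE6 (parE6 k).1 (parE6 k).2 = k := by decide

def cE6 : ℝ := (4 * Real.sqrt 3)⁻¹

def toR (v : Fin 8 → ℤ) : E8Space := WithLp.toLp 2 (fun i => (v i : ℝ))

def vecE6 (k : Fin 27) : E8Space := cE6 • toR (MZ k)

lemma inner_toR (v w : Fin 8 → ℤ) : ⟪toR v, toR w⟫ = ((dotZ v w : ℤ) : ℝ) := by
  simp [toR, dotZ, PiLp.inner_apply, RCLike.inner_apply, mul_comm]

lemma toR_sub_smul (v w : Fin 8 → ℤ) (a : ℤ) :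
    toR (v - a • w) = toR v - (a : ℝ) • toR w := by
  ext i
  simp only [toR, PiLp.toLp_apply, Pi.sub_apply, Pi.smul_apply, smul_eq_mul, PiLp.sub_apply, PiLp.smul_apply]
  push_cast
  ring

lemma root_eq (j : Fin 6) : E6root j = (2 : ℝ)⁻¹ • toR (drootZ j) := by
  ext i
  fin_cases j <;> fin_cases i <;>
    simp +decide only [E6root, drootZ, toR, PiLp.toLp_apply, PiLp.smul_apply] <;> norm_num

lemma u2hat_eq : u2hatE6 = vecE6 0 := by
  ext i
  fin_cases i <;>
    norm_num [u2hatE6, vecE6, cE6, toR, PiLp.toLp_apply, MZ, PiLp.smul_apply,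
      Matrix.cons_val_zero, Matrix.cons_val_one, Matrix.head_cons] <;>
    ring

lemma refl_formula (j : Fin 6) (k : Fin 27) :
    vecE6 k - ((2 * ⟪vecE6 k, E6root j⟫ / ⟪E6root j, E6root j⟫) • E6root j)
      = vecE6 (tgtE6 j k) := by
  obtain ⟨q, hq⟩ := dvd_spec j k
  have hdd : ⟪E6root j, E6root j⟫ = 2 := by
    rw [root_eq, real_inner_smul_left, real_inner_smul_right, inner_toR, droot_norm]
    norm_num
  have hmd : ⟪vecE6 k, E6root j⟫ = cE6 * 2⁻¹ * ((dotZ (MZ k) (drootZ j) : ℤ) : ℝ) := by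
    rw [vecE6, root_eq, real_inner_smul_left, real_inner_smul_right, inner_toR]
    ring
  have hdiv : ((dotZ (MZ k) (drootZ j) / 4 : ℤ) : ℝ)
      = ((dotZ (MZ k) (drootZ j) : ℤ) : ℝ) / 4 := by
    rw [hq, Int.mul_ediv_cancel_left _ (by norm_num)]
    push_cast
    ring
  rw [hmd, hdd]
  simp only [vecE6]
  rw [← tgt_spec j k, reflZ, toR_sub_smul, hdiv, root_eq]
  match_scalars <;> (push_cast; ring)

def sE6 (j : Fin 6) : E8Space ≃ₗᵢ[ℝ] E8Space := Submodule.reflection (ℝ ∙ E6root j)ᗮ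

lemma s_apply (j : Fin 6) (x : E8Space) :
    sE6 j x = x - ((2 * ⟪x, E6root j⟫ / ⟪E6root j, E6root j⟫) • E6root j) := by
  rw [sE6, Submodule.reflection_orthogonal_apply, Submodule.reflection_singleton_apply,
    real_inner_comm (E6root j) x, neg_sub]
  simp only [RCLike.ofReal_real_eq_id, id_eq]
  rw [← real_inner_self_eq_norm_sq]
  match_scalars <;> (push_cast; ring)

lemma sE6_mem (j : Fin 6) : sE6 j ∈ WeylE6 :=
  Subgroup.subset_closure ⟨j, s_apply j⟩

lemma gen_vec {f : E8Space ≃ₗᵢ[ℝ] E8Space} {j : Fin 6}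
    (hf : ∀ x, f x = x - ((2 * ⟪x, E6root j⟫ / ⟪E6root j, E6root j⟫) • E6root j))
    (k : Fin 27) : f (vecE6 k) = vecE6 (tgtE6 j k) := by
  rw [hf]; exact refl_formula j k

lemma cE6_ne : cE6 ≠ 0 := by
  have : Real.sqrt 3 > 0 := Real.sqrt_pos.mpr (by norm_num)
  simp only [cE6, ne_eq, inv_eq_zero]
  positivity

lemma vecE6_inj : Function.Injective vecE6 := by
  intro a b h
  apply MZ_inj
  have h2 : toR (MZ a) = toR (MZ b) := smul_right_injective E8Space cE6_ne h
  funext i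
  have := congrArg (fun v : E8Space => v i) h2
  simp only [toR] at this
  exact_mod_cast this

lemma mapsTo (w : E8Space ≃ₗᵢ[ℝ] E8Space) (hw : w ∈ WeylE6) :
    ∀ k, ∃ k', w (vecE6 k) = vecE6 k' := by
  induction hw using Subgroup.closure_induction with
  | mem f hf =>
    obtain ⟨j, hj⟩ := hf
    exact fun k => ⟨tgtE6 j k, gen_vec hj k⟩
  | one => exact fun k => ⟨k, rfl⟩
  | mul x y hx hy px py =>
    intro k
    obtain ⟨k1, h1⟩ := py k
    obtain ⟨k2, h2⟩ := px k1
    exact ⟨k2, by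
      show x (y (vecE6 k)) = vecE6 k2
      rw [h1, h2]⟩
  | inv x hx px =>
    choose g hg using px
    have ginj : Function.Injective g := by
      intro a b hab
      apply vecE6_inj
      apply x.injective
      rw [hg a, hg b, hab]
    intro k
    obtain ⟨a, ha⟩ := Finite.injective_iff_surjective.mp ginj k
    refine ⟨a, ?_⟩
    have hxa : x (vecE6 a) = vecE6 k := by rw [hg a, ha]
    rw [← hxa]
    exact x.symm_apply_apply _

lemma vec_mem_orbit : ∀ k : Fin 27, ∃ w ∈ WeylE6, w u2hatE6 = vecE6 k := by
  have main : ∀ n : ℕ, ∀ k : Fin 27, (k : ℕ) ≤ n →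
      ∃ w ∈ WeylE6, w u2hatE6 = vecE6 k := by
    intro n
    induction n with
    | zero =>
      intro k hk
      have : k = 0 := by
        apply Fin.ext
        omega
      subst this
      exact ⟨1, one_mem _, by rw [u2hat_eq]; rfl⟩
    | succ n ih =>
      intro k hk
      by_cases h0 : k = 0
      · subst h0
        exact ⟨1, one_mem _, by rw [u2hat_eq]; rfl⟩
      · obtain ⟨w, hw, hwe⟩ := ih (parE6 k).2 (by have := par_lt k h0; omega)
        refine ⟨sE6 (parE6 k).1 * w, mul_mem (sE6_mem _) hw, ?_⟩
        have h1 : (sE6 (parE6 k).1 * w) u2hatE6 = sE6 (parE6 k).1 (w u2hatE6) := rfl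
        rw [h1, hwe, gen_vec (s_apply _), par_tgt k h0]
  exact fun k => main (k : ℕ) k le_rfl

lemma orbit_eq : {v : E8Space | ∃ w ∈ WeylE6, w u2hatE6 = v} = Set.range vecE6 := by
  ext v
  constructor
  · rintro ⟨w, hw, rfl⟩
    rw [u2hat_eq]
    obtain ⟨k', hk'⟩ := mapsTo w hw 0
    exact ⟨k', hk'.symm⟩
  · rintro ⟨k, rfl⟩
    exact vec_mem_orbit k

end E6aux

theorem card_orbit_u2hatE6 :
    ({v : E8Space | ∃ w ∈ WeylE6, w u2hatE6 = v}).Finite ∧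
    ({v : E8Space | ∃ w ∈ WeylE6, w u2hatE6 = v}).ncard = 27 := by
  rw [E6aux.orbit_eq]
  refine ⟨Set.finite_range _, ?_⟩
  rw [← Nat.card_coe_set_eq, Nat.card_range_of_injective E6aux.vecE6_inj,
    Nat.card_eq_fintype_card, Fintype.card_fin]
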